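/- Let a, c, k, y, d be integers with k ≠ 0 and d·k² = y² + 4ack. If l is a prime such that the l-adic valuation of k is odd, then l divides 4ac. -/
import Mathlib

/-- If `p` is prime and `p^(2n+1) ∣ y^2`, then `p^(n+1) ∣ y`. -/
lemma aux_pow_dvd_sq (p : ℤ) (hp : Prime p) :
    ∀ (n : ℕ) (y : ℤ), p ^ (2 * n + 1) ∣ y ^ 2 → p ^ (n + 1) ∣ y := by
  intro n
  induction n with
  | zero =>
    intro y hy
    simpa using hp.dvd_of_dvd_pow (n := 2) (by simpa using hy)
  | succ n ih =>
    intro y hy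
    have hpy : p ∣ y := hp.dvd_of_dvd_pow (n := 2)
      (dvd_trans (dvd_pow_self p (Nat.succ_ne_zero _)) hy)
    obtain ⟨z, rfl⟩ := hpy
    have hp2 : p ^ 2 ≠ 0 := pow_ne_zero _ hp.ne_zero
    have hy' : p ^ (2 * n + 1) ∣ z ^ 2 := by
      have : p ^ 2 * (p ^ (2 * n + 1)) ∣ p ^ 2 * z ^ 2 := by
        have : p ^ (2 * (n + 1) + 1) = p ^ 2 * p ^ (2 * n + 1) := by ring
        rw [← this]
        have h2 : (p * z) ^ 2 = p ^ 2 * z ^ 2 := by ring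
        rwa [h2] at hy
      exact (mul_dvd_mul_iff_left hp2).mp this
    obtain ⟨w, hw⟩ := ih z hy'
    exact ⟨w, by rw [hw]; ring⟩

/-- auxiliary arithmetic claim.  Let `a, c, k, y, d` be integers with
`k ≠ 0` and `d·k² = y² + 4ack`.  If `l` is a prime whose `l`-adic valuation of `k` is odd
(i.e. `l^(2n+1) ∣ k` and `l^(2n+2) ∤ k` for some `n`), then `l ∣ 4ac`. -/
theorem prime_odd_valuation_dvd_four_mul
    (a c k y d : ℤ) (hk : k ≠ 0) (h : d * k ^ 2 = y ^ 2 + 4 * a * c * k)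
    (l : ℤ) (hl : Prime l) (n : ℕ)
    (h1 : l ^ (2 * n + 1) ∣ k) (h2 : ¬ l ^ (2 * n + 2) ∣ k) :
    l ∣ 4 * a * c := by
  obtain ⟨m, rfl⟩ := h1
  have hlm : ¬ l ∣ m := by
    rintro ⟨m', rfl⟩
    exact h2 ⟨m', by ring⟩
  -- l^(2n+1) ∣ y^2
  have hy2 : l ^ (2 * n + 1) ∣ y ^ 2 := by
    have : y ^ 2 = d * (l ^ (2 * n + 1) * m) ^ 2 - 4 * a * c * (l ^ (2 * n + 1) * m) := by
      linarith [h]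
    rw [this]
    exact dvd_sub ⟨l ^ (2 * n + 1) * (d * m ^ 2), by ring⟩ ⟨4 * a * c * m, by ring⟩
  have hy : l ^ (n + 1) ∣ y := aux_pow_dvd_sq l hl n y hy2
  -- l^(2n+2) ∣ 4 a c k
  obtain ⟨u, hu⟩ := hy
  have key : l ^ (2 * n + 2) ∣ 4 * a * c * (l ^ (2 * n + 1) * m) := by
    have : 4 * a * c * (l ^ (2 * n + 1) * m)
        = d * (l ^ (2 * n + 1) * m) ^ 2 - y ^ 2 := by linarith [h]
    rw [this, hu]
    exact dvd_sub ⟨l ^ (2 * n) * (d * m ^ 2), by ring⟩ ⟨u ^ 2, by ring⟩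
  obtain ⟨v, hv⟩ := key
  have hl1 : l ^ (2 * n + 1) ≠ 0 := pow_ne_zero _ hl.ne_zero
  have : l ∣ 4 * a * c * m := by
    refine ⟨v, ?_⟩
    have h' : l ^ (2 * n + 1) * (4 * a * c * m) = l ^ (2 * n + 1) * (l * v) := by
      linear_combination hv
    exact mul_left_cancel₀ hl1 h'
  rcases hl.dvd_mul.mp this with h' | h'
  · exact h'
  · exact absurd h' hlm
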